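/- Let Y ≥ 2, p > 0, d ≥ 1, and let (P_k)_{k≥0} be a sequence in [0,1] with lengths L_k = Y^k L_0 (L_0 > 1) satisfying P_{k+1} ≤ (2Y)^{2d} P_k² + (1/2) L_{k+1}^{−p} for all k. If 2(2Y)^{2d} P_0 < 1, then there exists K₀ ∈ ℕ with P_{K₀} ≤ L_{K₀}^{−p}. -/

import Mathlib

/-- Abstract recursion from the proof of Proposition 3.1: if `P_{k+1} ≤ (2Y)^{2d} P_k² +
(1/2) L_{k+1}^{-p}` with `L_k = Y^k L_0` and `2(2Y)^{2d} P_0 < 1`, then `P_{K₀} ≤ L_{K₀}^{-p}`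
for some `K₀`. -/
theorem recursion_polynomial_probabilities (Y : ℝ) (hY : 2 ≤ Y) (p : ℝ) (hp : 0 < p)
    (d : ℕ) (hd : 1 ≤ d) (L₀ : ℝ) (hL₀ : 1 < L₀)
    (P : ℕ → ℝ) (hPmem : ∀ k, P k ∈ Set.Icc (0 : ℝ) 1)
    (hrec : ∀ k, P (k + 1) ≤ (2 * Y) ^ (2 * d) * (P k) ^ 2 +
      (1 / 2) * (Y ^ (k + 1) * L₀) ^ (-p))
    (hinit : 2 * (2 * Y) ^ (2 * d) * P 0 < 1) :
    ∃ K₀ : ℕ, P K₀ ≤ (Y ^ K₀ * L₀) ^ (-p) := by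
  by_contra hcon
  push_neg at hcon
  have hYpos : (0:ℝ) < Y := lt_of_lt_of_le two_pos hY
  have hL₀pos : (0:ℝ) < L₀ := lt_trans one_pos hL₀
  set A : ℝ := (2 * Y) ^ (2 * d) with hA
  have hApos : 0 < A := by positivity
  have hA1 : (1:ℝ) ≤ A := one_le_pow₀ (by linarith)
  have hP0 : ∀ k, 0 ≤ P k := fun k => (hPmem k).1
  have hLpos : ∀ k : ℕ, (0:ℝ) < (Y ^ k * L₀) ^ (-p) :=
    fun k => Real.rpow_pos_of_pos (by positivity) _
  -- step inequality
  have hstep : ∀ k, P (k + 1) < 2 * A * (P k) ^ 2 := by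
    intro k
    have h1 := hrec k
    have h2 := hcon (k + 1)
    linarith [hLpos (k + 1)]
  -- iterate
  have hQ : ∀ k, 2 * A * P k ≤ (2 * A * P 0) ^ (2 ^ k) := by
    intro k
    induction k with
    | zero => simp
    | succ k ih =>
      have h1 := hstep k
      have h2 : (2 * A * P k) ^ 2 ≤ ((2 * A * P 0) ^ (2 ^ k)) ^ 2 :=
        pow_le_pow_left₀ (mul_nonneg (by positivity) (hP0 k)) ih 2
      calc 2 * A * P (k + 1) ≤ (2 * A * P k) ^ 2 := by nlinarith
        _ ≤ ((2 * A * P 0) ^ (2 ^ k)) ^ 2 := h2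
        _ = (2 * A * P 0) ^ (2 ^ (k + 1)) := by rw [← pow_mul, pow_succ]
  set Q : ℝ := 2 * A * P 0 with hQ0
  have hQnn : 0 ≤ Q := mul_nonneg (by positivity) (hP0 0)
  have hQlt : Q < 1 := hinit
  -- choose M with Q^M small
  have hmin : (0:ℝ) < min (Y ^ (-p)) (L₀ ^ (-p)) :=
    lt_min (Real.rpow_pos_of_pos hYpos _) (Real.rpow_pos_of_pos hL₀pos _)
  obtain ⟨M, hM⟩ := exists_pow_lt_of_lt_one hmin hQlt
  have hMY : Q ^ M ≤ Y ^ (-p) := (le_min_iff.mp hM.le).1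
  have hML : Q ^ M ≤ L₀ ^ (-p) := (le_min_iff.mp hM.le).2
  set k : ℕ := 3 * M with hk
  -- 2^k ≥ M*(k+1)
  have h2k : M * (k + 1) ≤ 2 ^ k := by
    have h : M + 1 ≤ 2 ^ M := Nat.lt_two_pow_self (n := M)
    have hb : M * (3 * M + 1) ≤ (M + 1) ^ 3 := by
      have : M * (3 * M + 1) + (M ^ 3 + 2 * M + 1) = (M + 1) ^ 3 := by ring
      omega
    calc M * (3 * M + 1) ≤ (M + 1) ^ 3 := hb
      _ ≤ (2 ^ M) ^ 3 := Nat.pow_le_pow_left h 3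
      _ = 2 ^ (3 * M) := by rw [← pow_mul, mul_comm]
  have hQMnn : 0 ≤ Q ^ M := pow_nonneg hQnn M
  have hchain : Q ^ (2 ^ k) ≤ (Y ^ k * L₀) ^ (-p) := by
    have e1 : Q ^ (2 ^ k) ≤ Q ^ (M * (k + 1)) :=
      pow_le_pow_of_le_one hQnn hQlt.le h2k
    have e2 : Q ^ (M * (k + 1)) = (Q ^ M) ^ k * Q ^ M := by
      rw [pow_mul, pow_succ]
    have e3 : (Q ^ M) ^ k * Q ^ M ≤ (Y ^ (-p)) ^ k * L₀ ^ (-p) := by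
      apply mul_le_mul _ hML hQMnn (by positivity)
      exact pow_le_pow_left₀ hQMnn hMY k
    have e4 : (Y ^ (-p)) ^ k * L₀ ^ (-p) = (Y ^ k * L₀) ^ (-p) := by
      rw [Real.mul_rpow (by positivity) hL₀pos.le, ← Real.rpow_natCast Y k,
        ← Real.rpow_natCast (Y ^ (-p)) k, ← Real.rpow_mul hYpos.le,
        ← Real.rpow_mul hYpos.le, mul_comm ((k:ℝ)) (-p)]
    calc Q ^ (2 ^ k) ≤ Q ^ (M * (k + 1)) := e1
      _ = (Q ^ M) ^ k * Q ^ M := e2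
      _ ≤ (Y ^ (-p)) ^ k * L₀ ^ (-p) := e3
      _ = (Y ^ k * L₀) ^ (-p) := e4
  have hfin := hQ k
  have hck := hcon k
  nlinarith [hLpos k, hA1, hApos, hP0 k, mul_nonneg (by linarith : (0:ℝ) ≤ A - 1) (hP0 k)]
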